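/- Let X⁺, X ∈ ℝ^{n×T}, U ∈ ℝ^{m×T}, D ∈ ℝ^{n_w×n}, P ∈ ℝ^{n_p×n}, W ∈ ℝ^{n×n} invertible, N ∈ ℝ^{m×n}, and θ¹,…,θ^{r} ∈ ℝⁿ. Set Z = [X;U]ᵀ ⊗ D, d = vec(D·X⁺), and for each j set G_j = ([W;N]·θ^j)ᵀ ⊗ I_n. Suppose that for every i ∈ {1,…,n_p} and j ∈ {1,…,r} there exist a scalar φ_{ij} > 0, diagonal matrices Λ_{ij} ∈ ℝ^{T·n_w × T·n_w} and Γ_{ij} ∈ ℝ^{n_w × n_w} with nonnegative diagonal entries, a symmetric positive definite matrix X_{ij} ∈ ℝ^{n×n}, and an invertible matrix V_{ij} ∈ ℝ^{n×n}, such that: (a) the symmetric block matrix [[W + Wᵀ − X_{ij}, φ_{ij}·Pᵀe_i], [φ_{ij}·e_iᵀP, φ_{ij}]] is positive semidefinite; and (b) with r_{ij} = φ_{ij} − 𝟏ᵀΛ_{ij}𝟏 − 𝟏ᵀΓ_{ij}𝟏 + dᵀΛ_{ij}d, the symmetric block matrix [[r_{ij}, −dᵀΛ_{ij}Z, 0,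 0, 0], [−ZᵀΛ_{ij}d, ZᵀΛ_{ij}Z, 0, G_jᵀ, 0], [0, 0, DᵀΓ_{ij}D, I_n, 0], [0, G_j, I_n, V_{ij} + V_{ij}ᵀ, V_{ij}ᵀ], [0, 0, 0, V_{ij}, X_{ij}]] is positive semidefinite. Then for every M ∈ ℝ^{n×(n+m)} with every entry of D·X⁺ − D·M·[X;U] in [−1,1], every w ∈ ℝⁿ with −𝟏 ≤ D·w ≤ 𝟏 entrywise, and every j ∈ {1,…,r}, the point θ⁺ = W⁻¹·(M·[W;N]·θ^j + w) satisfies −𝟏 ≤ P·θ⁺ ≤ 𝟏 entrywise. -/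

import Mathlib

open Matrix
open scoped Kronecker

section helpers
variable {ι : Type*} [Fintype ι]

lemma diag_quad_le (Λ : Matrix ι ι ℝ)
    (hoff : ∀ p q, p ≠ q → Λ p q = 0) (hdiag : ∀ p, 0 ≤ Λ p p)
    (x : ι → ℝ) (hx : ∀ p, |x p| ≤ 1) :
    x ⬝ᵥ Λ.mulVec x ≤ (fun _ => (1:ℝ)) ⬝ᵥ Λ.mulVec (fun _ => 1) := by
  have hq : ∀ (y : ι → ℝ), y ⬝ᵥ Λ.mulVec y = ∑ p, Λ p p * (y p)^2 := by
    intro y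
    simp only [dotProduct, Matrix.mulVec, dotProduct]
    refine Finset.sum_congr rfl fun p _ => ?_
    rw [Finset.sum_eq_single p]
    · ring
    · intro q _ hq; rw [hoff p q (Ne.symm hq)]; ring
    · intro h; exact absurd (Finset.mem_univ p) h
  rw [hq, hq]
  refine Finset.sum_le_sum fun p _ => ?_
  have h1 : (x p)^2 ≤ 1^2 := sq_le_sq' (neg_le_of_abs_le (by simpa using hx p)) (le_of_abs_le (by simpa using hx p))
  nlinarith [hdiag p, sq_nonneg (x p)]

variable [DecidableEq ι]

lemma young_ineq (X : Matrix ι ι ℝ) (hX : X.PosDef) (a b : ι → ℝ) :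
    2 * (a ⬝ᵥ b) ≤ a ⬝ᵥ X.mulVec a + b ⬝ᵥ X⁻¹.mulVec b := by
  have hXu : IsUnit X.det := isUnit_iff_ne_zero.2 hX.det_pos.ne'
  have hsym : Xᵀ = X := hX.isHermitian
  have key := hX.posSemidef.dotProduct_mulVec_nonneg (a - X⁻¹.mulVec b)
  simp only [star_trivial] at key
  have hXXi : X * X⁻¹ = 1 := Matrix.mul_nonsing_inv X hXu
  have h1 : X.mulVec (a - X⁻¹.mulVec b) = X.mulVec a - b := by
    rw [Matrix.mulVec_sub, Matrix.mulVec_mulVec, hXXi, Matrix.one_mulVec]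
  rw [h1, sub_dotProduct, dotProduct_sub, dotProduct_sub] at key
  have h2 : (X⁻¹.mulVec b) ⬝ᵥ (X.mulVec a) = b ⬝ᵥ a := by
    rw [dotProduct_mulVec, ← Matrix.mulVec_transpose, hsym, Matrix.mulVec_mulVec,
      Matrix.mul_nonsing_inv X hXu, Matrix.one_mulVec]
  rw [h2] at key
  have h4 : a ⬝ᵥ b = b ⬝ᵥ a := dotProduct_comm a b
  have h5 : (X⁻¹.mulVec b) ⬝ᵥ b = b ⬝ᵥ (X⁻¹.mulVec b) := dotProduct_comm _ b
  linarith [key]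

end helpers

set_option maxHeartbeats 1000000 in
/-- **Dilated data-based LMI conditions for invariance (Theorem 2).**
Suppose that for all `i, j` there exist `φ_{ij} > 0`, diagonal nonnegative
`Λ_{ij}, Γ_{ij}`, a symmetric positive definite `X_{ij}` and an invertible `V_{ij}` such
that (a) `[[W + Wᵀ − X_{ij}, φ_{ij}·Pᵀe_i], [φ_{ij}·e_iᵀP, φ_{ij}]] ⪰ 0`, and
(b) the symmetric block matrix
`[[r_{ij}, −dᵀΛ_{ij}Z, 0, 0, 0], [−ZᵀΛ_{ij}d, ZᵀΛ_{ij}Z, 0, G_jᵀ, 0],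
  [0, 0, DᵀΓ_{ij}D, I_n, 0], [0, G_j, I_n, V_{ij} + V_{ij}ᵀ, V_{ij}ᵀ],
  [0, 0, 0, V_{ij}, X_{ij}]]` is positive semidefinite. Then for any data-consistent
model `M`, admissible disturbance `w` and vertex `θʲ`, the point
`θ⁺ = W⁻¹(M·[W;N]·θʲ + w)` satisfies `−𝟏 ≤ P·θ⁺ ≤ 𝟏`. -/
theorem dilated_data_based_lmi_invariance (n m T nw np r : ℕ)
    (Xp X : Matrix (Fin n) (Fin T) ℝ) (U : Matrix (Fin m) (Fin T) ℝ)
    (D : Matrix (Fin nw) (Fin n) ℝ) (P : Matrix (Fin np) (Fin n) ℝ)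
    (W : Matrix (Fin n) (Fin n) ℝ) (hW : IsUnit W.det)
    (N : Matrix (Fin m) (Fin n) ℝ)
    (θ : Fin r → (Fin n → ℝ))
    (Z : Matrix (Fin T × Fin nw) ((Fin n ⊕ Fin m) × Fin n) ℝ)
    (hZ : Z = (fromRows X U)ᵀ ⊗ₖ D)
    (d : Fin T × Fin nw → ℝ)
    (hd : d = fun p => (D * Xp) p.2 p.1)
    (G : Fin r → Matrix (Fin n) ((Fin n ⊕ Fin m) × Fin n) ℝ)
    (hG : ∀ j, G j = Matrix.of fun a q =>
      ((fromRows W N).mulVec (θ j)) q.1 * (1 : Matrix (Fin n) (Fin n) ℝ) a q.2)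
    (hLMI : ∀ (i : Fin np) (j : Fin r),
      ∃ (φ : ℝ) (Λ : Matrix (Fin T × Fin nw) (Fin T × Fin nw) ℝ)
        (Γ : Matrix (Fin nw) (Fin nw) ℝ)
        (Xij V : Matrix (Fin n) (Fin n) ℝ),
        0 < φ ∧
        (∀ p q, p ≠ q → Λ p q = 0) ∧ (∀ p, 0 ≤ Λ p p) ∧
        (∀ p q, p ≠ q → Γ p q = 0) ∧ (∀ p, 0 ≤ Γ p p) ∧
        Xij.PosDef ∧ IsUnit V.det ∧
        (Matrix.fromBlocks
          (W + Wᵀ - Xij)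
          (Matrix.replicateCol Unit (φ • Pᵀ.mulVec (Pi.single i 1)))
          (Matrix.replicateRow Unit (φ • Matrix.vecMul (Pi.single i 1) P))
          (Matrix.of fun (_ _ : Unit) => φ)).PosSemidef ∧
        (Matrix.fromBlocks
          (Matrix.fromBlocks
            (Matrix.of fun (_ _ : Unit) =>
              φ - (fun _ => (1 : ℝ)) ⬝ᵥ Λ.mulVec (fun _ => (1 : ℝ))
                - (fun _ => (1 : ℝ)) ⬝ᵥ Γ.mulVec (fun _ => (1 : ℝ))
                + d ⬝ᵥ Λ.mulVec d)
            (Matrix.of fun (_ : Unit) q => -(Matrix.vecMul (Matrix.vecMul d Λ) Z) q)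
            (Matrix.of fun q (_ : Unit) => -(Zᵀ.mulVec (Λ.mulVec d)) q)
            (Zᵀ * Λ * Z))
          (Matrix.fromBlocks 0 0 0 (fromCols (G j)ᵀ 0))
          (Matrix.fromBlocks 0 0 0 (fromRows (G j) 0))
          (Matrix.fromBlocks (Dᵀ * Γ * D) (fromCols 1 0) (fromRows 1 0)
            (Matrix.fromBlocks (V + Vᵀ) Vᵀ V Xij))).PosSemidef) :
    ∀ M : Matrix (Fin n) (Fin n ⊕ Fin m) ℝ,
      (∀ a b, (D * Xp - D * M * fromRows X U) a b ∈ Set.Icc (-1 : ℝ) 1) →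
      ∀ w : Fin n → ℝ, (∀ a, -1 ≤ D.mulVec w a ∧ D.mulVec w a ≤ 1) →
      ∀ j : Fin r,
        ∀ a, -1 ≤ P.mulVec (W⁻¹.mulVec (M.mulVec ((fromRows W N).mulVec (θ j)) + w)) a ∧
          P.mulVec (W⁻¹.mulVec (M.mulVec ((fromRows W N).mulVec (θ j)) + w)) a ≤ 1 := by
  intro M hM w hw j a
  obtain ⟨φ, Λ, Γ, Xij, V, hφ, hΛoff, hΛdiag, hΓoff, hΓdiag, hXpd, hV, hA, hB⟩ := hLMI a j
  set b : Fin n ⊕ Fin m → ℝ := (fromRows W N).mulVec (θ j) with hb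
  set y : Fin n → ℝ := M.mulVec b + w with hy
  set tp : Fin n → ℝ := W⁻¹.mulVec y with htp
  have hWtp : W.mulVec tp = y := by
    rw [htp, Matrix.mulVec_mulVec, Matrix.mul_nonsing_inv W hW, Matrix.one_mulVec]
  set p : ℝ := (P.mulVec tp) a with hp
  have hXu : IsUnit Xij.det := isUnit_iff_ne_zero.2 hXpd.det_pos.ne'
  have hXsym : Xijᵀ = Xij := hXpd.isHermitian
  -- Step 1 : small LMI
  have hsmall : φ * p^2 ≤ 2 * (tp ⬝ᵥ y) - tp ⬝ᵥ (Xij.mulVec tp) := by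
    have key := hA.dotProduct_mulVec_nonneg (Sum.elim tp (fun _ => -p))
    simp only [star_trivial, Matrix.fromBlocks_mulVec, sumElim_dotProduct_sumElim,
      Sum.elim_comp_inl, Sum.elim_comp_inr, dotProduct_add] at key
    have h1 : p = ∑ k, P a k * tp k := by rw [hp]; rfl
    have e1 : tp ⬝ᵥ (W + Wᵀ - Xij) *ᵥ tp = 2 * (tp ⬝ᵥ y) - tp ⬝ᵥ Xij *ᵥ tp := by
      rw [Matrix.sub_mulVec, Matrix.add_mulVec, dotProduct_sub, dotProduct_add, hWtp]
      have h2 : tp ⬝ᵥ Wᵀ *ᵥ tp = tp ⬝ᵥ y := by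
        rw [Matrix.mulVec_transpose, dotProduct_comm, ← Matrix.dotProduct_mulVec, hWtp]
      rw [h2]; try ring
    have e2 : (tp ⬝ᵥ Matrix.replicateCol Unit (φ • Pᵀ *ᵥ Pi.single a 1) *ᵥ fun _ => -p) = -p * (φ * p) := by
      simp only [Matrix.mulVec, dotProduct, Matrix.replicateCol_apply, Pi.smul_apply, smul_eq_mul,
        Finset.univ_unique, Finset.sum_singleton, Matrix.transpose_apply, Pi.single_apply,
        mul_ite, mul_one, mul_zero, Finset.sum_ite_eq', Finset.mem_univ, if_true]
      rw [h1, Finset.mul_sum, Finset.mul_sum]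
      exact Finset.sum_congr rfl fun i _ => by ring
    have e3 : ((fun _ : Unit => -p) ⬝ᵥ Matrix.replicateRow Unit (φ • Pi.single a 1 ᵥ* P) *ᵥ tp) = -p * (φ * p) := by
      simp only [Matrix.mulVec, Matrix.vecMul, dotProduct, Matrix.replicateRow_apply, Pi.smul_apply,
        smul_eq_mul, Finset.univ_unique, Finset.sum_singleton, Pi.single_apply,
        ite_mul, one_mul, zero_mul, Finset.sum_ite_eq, Finset.mem_univ, if_true]
      rw [h1, Finset.mul_sum, Finset.mul_sum, Finset.mul_sum]
      refine Finset.sum_congr rfl fun i _ => ?_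
      simp only [Finset.sum_ite_eq', Finset.mem_univ, if_true]
      ring
    have e4 : ((fun _ : Unit => -p) ⬝ᵥ (Matrix.of fun (_ _ : Unit) => φ) *ᵥ fun _ => -p) = φ * p * p := by
      simp only [Matrix.mulVec, dotProduct, Matrix.of_apply, Finset.univ_unique,
        Finset.sum_singleton]
      ring
    rw [e1, e2, e3, e4] at key
    nlinarith [key]
  -- Step 2 : Young
  have hyoung := young_ineq Xij hXpd tp y
  have hφp : φ * p^2 ≤ y ⬝ᵥ Xij⁻¹ *ᵥ y := by linarith
  -- Step 3 : big LMI
  set c : Fin n → ℝ := Xij⁻¹ *ᵥ y with hc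
  have hXc : Xij *ᵥ c = y := by
    rw [hc, Matrix.mulVec_mulVec, Matrix.mul_nonsing_inv Xij hXu, Matrix.one_mulVec]
  set u : Fin n → ℝ := V *ᵥ c with hu
  set kk : Fin n → ℝ := Xij⁻¹ *ᵥ u with hkk
  have hXk : Xij *ᵥ kk = u := by
    rw [hkk, Matrix.mulVec_mulVec, Matrix.mul_nonsing_inv Xij hXu, Matrix.one_mulVec]
  set v : ((Fin n ⊕ Fin m) × Fin n) → ℝ := fun q => M q.2 q.1 with hv
  have hGv : (G j) *ᵥ v = M *ᵥ b := by
    ext i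
    rw [hG]
    simp only [Matrix.mulVec, dotProduct, Fintype.sum_prod_type, Matrix.of_apply,
      Matrix.one_apply, mul_ite, mul_one, mul_zero, ite_mul, zero_mul,
      Finset.sum_ite_eq, Finset.mem_univ, if_true]
    exact Finset.sum_congr rfl fun q1 _ => mul_comm _ _
  have hZv : Z *ᵥ v = fun pp => (D * M * fromRows X U) pp.2 pp.1 := by
    ext pp
    rw [hZ]
    simp only [Matrix.mulVec, dotProduct, Fintype.sum_prod_type, Matrix.kroneckerMap_apply,
      Matrix.transpose_apply, Matrix.mul_apply, Finset.sum_mul, Finset.mul_sum]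
    refine Finset.sum_congr rfl fun q1 _ => Finset.sum_congr rfl fun q2 _ => by
      simp only [hv]; ring
  have hδ : ∀ pp, |(d - Z *ᵥ v) pp| ≤ 1 := by
    intro pp
    have h := hM pp.2 pp.1
    rw [Set.mem_Icc] at h
    have heq : (d - Z *ᵥ v) pp = (D * Xp - D * M * fromRows X U) pp.2 pp.1 := by
      simp [hd, hZv, Matrix.sub_apply]
    rw [heq, abs_le]; exact h
  have hq1 := diag_quad_le Λ hΛoff hΛdiag _ hδ
  have hq2 := diag_quad_le Γ hΓoff hΓdiag (D *ᵥ w) (fun pp => abs_le.mpr (hw pp))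
  have key2 := hB.dotProduct_mulVec_nonneg (Sum.elim (Sum.elim (fun _ => (1:ℝ)) v) (Sum.elim w (Sum.elim (-c) kk)))
  simp only [star_trivial, Matrix.fromBlocks_mulVec, sumElim_dotProduct_sumElim,
    Sum.elim_comp_inl, Sum.elim_comp_inr, dotProduct_add, Matrix.zero_mulVec, Matrix.mulVec_zero,
    add_zero, zero_add, dotProduct_zero, Matrix.fromRows_mulVec,
    Matrix.fromCols_mulVec_sumElim] at key2
  have hΛsym : Λᵀ = Λ := by
    ext pq qq
    by_cases h : pq = qq
    · subst h; rfl
    · rw [Matrix.transpose_apply, hΛoff pq qq h, hΛoff qq pq (Ne.symm h)]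
  have E1 : ((fun _ : Unit => (1:ℝ)) ⬝ᵥ
      (Matrix.of fun (_ _ : Unit) =>
        ((φ - (fun _ => (1:ℝ)) ⬝ᵥ Λ *ᵥ fun _ => 1) - (fun _ => (1:ℝ)) ⬝ᵥ Γ *ᵥ fun _ => 1)
          + d ⬝ᵥ Λ *ᵥ d) *ᵥ fun _ => 1)
      = ((φ - (fun _ => (1:ℝ)) ⬝ᵥ Λ *ᵥ fun _ => 1) - (fun _ => (1:ℝ)) ⬝ᵥ Γ *ᵥ fun _ => 1)
          + d ⬝ᵥ Λ *ᵥ d := by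
    simp [Matrix.mulVec, dotProduct]
  have E2 : ((fun _ : Unit => (1:ℝ)) ⬝ᵥ (Matrix.of fun (_ : Unit) q => -(d ᵥ* Λ ᵥ* Z) q) *ᵥ v)
      = -(d ⬝ᵥ Λ *ᵥ (Z *ᵥ v)) := by
    have h2 : d ⬝ᵥ Λ *ᵥ (Z *ᵥ v) = (d ᵥ* Λ ᵥ* Z) ⬝ᵥ v := by
      rw [Matrix.dotProduct_mulVec, Matrix.dotProduct_mulVec]
    rw [h2]
    simp [Matrix.mulVec, dotProduct]
  have E3a : (v ⬝ᵥ (Matrix.of fun q (_ : Unit) => -(Zᵀ *ᵥ Λ *ᵥ d) q) *ᵥ fun _ => 1)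
      = -(d ⬝ᵥ Λ *ᵥ (Z *ᵥ v)) := by
    have h2 : v ⬝ᵥ Zᵀ *ᵥ (Λ *ᵥ d) = d ⬝ᵥ Λ *ᵥ (Z *ᵥ v) := by
      rw [Matrix.dotProduct_mulVec, Matrix.vecMul_transpose, Matrix.dotProduct_mulVec,
        ← Matrix.mulVec_transpose, hΛsym, dotProduct_comm]
    rw [← h2]
    simp [Matrix.mulVec, dotProduct, Finset.sum_mul]
  have E3b : v ⬝ᵥ (Zᵀ * Λ * Z) *ᵥ v = (Z *ᵥ v) ⬝ᵥ Λ *ᵥ (Z *ᵥ v) := by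
    rw [← Matrix.mulVec_mulVec, ← Matrix.mulVec_mulVec, Matrix.dotProduct_mulVec,
      Matrix.vecMul_transpose]
  have E4 : v ⬝ᵥ (G j)ᵀ *ᵥ (-c) = -((M *ᵥ b) ⬝ᵥ c) := by
    rw [Matrix.dotProduct_mulVec, Matrix.vecMul_transpose, hGv, dotProduct_neg]
  have E5 : (-c) ⬝ᵥ (G j) *ᵥ v = -(c ⬝ᵥ (M *ᵥ b)) := by
    rw [hGv, neg_dotProduct]
  have E6 : w ⬝ᵥ (Dᵀ * Γ * D) *ᵥ w = (D *ᵥ w) ⬝ᵥ Γ *ᵥ (D *ᵥ w) := by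
    rw [← Matrix.mulVec_mulVec, ← Matrix.mulVec_mulVec, Matrix.dotProduct_mulVec,
      Matrix.vecMul_transpose]
  have E7 : w ⬝ᵥ (1 : Matrix (Fin n) (Fin n) ℝ) *ᵥ (-c) = -(w ⬝ᵥ c) := by
    rw [Matrix.one_mulVec, dotProduct_neg]
  have E8 : (-c) ⬝ᵥ (1 : Matrix (Fin n) (Fin n) ℝ) *ᵥ w = -(c ⬝ᵥ w) := by
    rw [Matrix.one_mulVec, neg_dotProduct]
  have E9 : (-c) ⬝ᵥ (V + Vᵀ) *ᵥ (-c) = c ⬝ᵥ u + u ⬝ᵥ c := by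
    have h2 : c ⬝ᵥ Vᵀ *ᵥ c = u ⬝ᵥ c := by
      rw [Matrix.dotProduct_mulVec, Matrix.vecMul_transpose, hu]
    simp only [Matrix.add_mulVec, Matrix.mulVec_neg, dotProduct_add, dotProduct_neg,
      neg_dotProduct, neg_neg]
    rw [h2, ← hu]; ring
  have E10 : (-c) ⬝ᵥ Vᵀ *ᵥ kk = -(u ⬝ᵥ kk) := by
    rw [neg_dotProduct, Matrix.dotProduct_mulVec, Matrix.vecMul_transpose, hu]
  have E11 : kk ⬝ᵥ V *ᵥ (-c) = -(kk ⬝ᵥ u) := by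
    rw [Matrix.mulVec_neg, dotProduct_neg, ← hu]
  have E12 : kk ⬝ᵥ Xij *ᵥ kk = kk ⬝ᵥ u := by rw [hXk]
  rw [E1, E2, E3a, E3b, E4, E5, E6, E7, E8, E9, E10, E11, E12] at key2
  -- Young for (c, u)
  have hcu := young_ineq Xij hXpd c u
  rw [hXc, ← hkk] at hcu
  -- expansion of the Λ quadratic
  have hexp : (d - Z *ᵥ v) ⬝ᵥ Λ *ᵥ (d - Z *ᵥ v)
      = d ⬝ᵥ Λ *ᵥ d - 2 * (d ⬝ᵥ Λ *ᵥ (Z *ᵥ v)) + (Z *ᵥ v) ⬝ᵥ Λ *ᵥ (Z *ᵥ v) := by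
    rw [Matrix.mulVec_sub, sub_dotProduct, dotProduct_sub, dotProduct_sub]
    have h2 : (Z *ᵥ v) ⬝ᵥ Λ *ᵥ d = d ⬝ᵥ Λ *ᵥ (Z *ᵥ v) := by
      rw [Matrix.dotProduct_mulVec, ← Matrix.mulVec_transpose, hΛsym, dotProduct_comm]
    rw [h2]; ring
  rw [hexp] at hq1
  -- assemble
  have hcy : c ⬝ᵥ y = y ⬝ᵥ c := dotProduct_comm c y
  have hky : kk ⬝ᵥ u = u ⬝ᵥ kk := dotProduct_comm kk u
  have huc : u ⬝ᵥ c = c ⬝ᵥ u := dotProduct_comm u c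
  have hcy2 : c ⬝ᵥ (M *ᵥ b) + c ⬝ᵥ w = c ⬝ᵥ y := by
    rw [hy, dotProduct_add]
  have hMbc : (M *ᵥ b) ⬝ᵥ c = c ⬝ᵥ (M *ᵥ b) := dotProduct_comm _ c
  have hwc : w ⬝ᵥ c = c ⬝ᵥ w := dotProduct_comm w c
  have hyc : y ⬝ᵥ c ≤ φ := by nlinarith [key2, hq1, hq2, hcu]
  have hp2 : p ^ 2 ≤ 1 := by nlinarith [hφp, hyc, hφ]
  exact abs_le.mp ((sq_le_one_iff_abs_le_one p).mp hp2)
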